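/- Let F ∈ ℂ[x,y,z] be a homogeneous polynomial of total degree δ ≥ 1 such that the three partial derivatives ∂F/∂x, ∂F/∂y, ∂F/∂z have no common zero in ℂ³ \ {0} (i.e. the projective plane curve F = 0 is nonsingular). Then F is irreducible in ℂ[x,y,z]. -/

import Mathlib

open MvPolynomial

namespace NonsingIrred

variable {σ : Type*}

lemma degree_add (a b : σ →₀ ℕ) : (a + b).degree = a.degree + b.degree := by
  rw [Finsupp.degree_eq_weight_one]
  exact map_add _ a b

lemma isHomogeneous_of_coeff (φ : MvPolynomial σ ℂ) (n : ℕ)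
    (h : ∀ d : σ →₀ ℕ, coeff d φ ≠ 0 → d.degree = n) : φ.IsHomogeneous n := by
  intro d hd
  rw [show (Finsupp.weight (1 : σ → ℕ)) d = (Finsupp.weight fun _ => (1 : ℕ)) d from rfl,
    ← Finsupp.degree_eq_weight_one]
  exact h d hd

lemma degree_le_totalDegree {p : MvPolynomial σ ℂ} {d : σ →₀ ℕ} (h : d ∈ p.support) :
    d.degree ≤ p.totalDegree := le_totalDegree h

/-- bottom-component convolution -/
lemma hc_mul_low (G H : MvPolynomial σ ℂ) (k l : ℕ)
    (hG : ∀ u : σ →₀ ℕ, u.degree < k → coeff u G = 0)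
    (hH : ∀ v : σ →₀ ℕ, v.degree < l → coeff v H = 0) :
    homogeneousComponent (k + l) (G * H) =
      homogeneousComponent k G * homogeneousComponent l H := by
  classical
  ext d
  rw [coeff_homogeneousComponent]
  by_cases h : d.degree = k + l
  · rw [if_pos h, coeff_mul, coeff_mul]
    refine Finset.sum_congr rfl ?_
    rintro ⟨u, v⟩ huv
    have hsum : u.degree + v.degree = k + l := by
      rw [← degree_add, Finset.HasAntidiagonal.mem_antidiagonal.mp huv, h]
    dsimp only
    rw [coeff_homogeneousComponent, coeff_homogeneousComponent]
    rcases lt_trichotomy u.degree k with hlt | heq | hgt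
    · rw [hG u hlt, if_neg (by omega), zero_mul, zero_mul]
    · rw [if_pos heq, if_pos (by omega)]
    · rw [if_neg (show ¬ v.degree = l by omega), mul_zero, hH v (by omega), mul_zero]
  · rw [if_neg h]
    exact (((homogeneousComponent_isHomogeneous k G).mul
      (homogeneousComponent_isHomogeneous l H)).coeff_eq_zero h).symm

/-- top-component convolution -/
lemma hc_mul_high (G H : MvPolynomial σ ℂ) (k l : ℕ)
    (hG : ∀ u : σ →₀ ℕ, k < u.degree → coeff u G = 0)
    (hH : ∀ v : σ →₀ ℕ, l < v.degree → coeff v H = 0) :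
    homogeneousComponent (k + l) (G * H) =
      homogeneousComponent k G * homogeneousComponent l H := by
  classical
  ext d
  rw [coeff_homogeneousComponent]
  by_cases h : d.degree = k + l
  · rw [if_pos h, coeff_mul, coeff_mul]
    refine Finset.sum_congr rfl ?_
    rintro ⟨u, v⟩ huv
    have hsum : u.degree + v.degree = k + l := by
      rw [← degree_add, Finset.HasAntidiagonal.mem_antidiagonal.mp huv, h]
    dsimp only
    rw [coeff_homogeneousComponent, coeff_homogeneousComponent]
    rcases lt_trichotomy u.degree k with hlt | heq | hgt
    · rw [if_neg (show ¬ v.degree = l by omega), mul_zero, hH v (by omega), mul_zero]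
    · rw [if_pos heq, if_pos (by omega)]
    · rw [hG u hgt, if_neg (by omega), zero_mul, zero_mul]
  · rw [if_neg h]
    exact (((homogeneousComponent_isHomogeneous k G).mul
      (homogeneousComponent_isHomogeneous l H)).coeff_eq_zero h).symm

/-- component of a product with a homogeneous polynomial -/
lemma hc_mul_homog (A H : MvPolynomial σ ℂ) {e m : ℕ} (hH : H.IsHomogeneous e)
    (he : e ≤ m) :
    homogeneousComponent m (A * H) = homogeneousComponent (m - e) A * H := by
  have key : homogeneousComponent m (A * H) =
      ∑ i ∈ Finset.range (A.totalDegree + 1),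
        if m = i + e then homogeneousComponent i A * H else 0 := by
    conv_lhs => rw [← sum_homogeneousComponent A]
    rw [Finset.sum_mul, map_sum]
    exact Finset.sum_congr rfl fun i _ =>
      homogeneousComponent_of_mem ((homogeneousComponent_isHomogeneous i A).mul hH)
  rw [key]
  by_cases hle : m - e ≤ A.totalDegree
  · rw [Finset.sum_eq_single (m - e)]
    · rw [if_pos (by omega)]
    · intro i _ hne
      rw [if_neg (by omega)]
    · intro hnot
      exact absurd (Finset.mem_range.mpr (by omega)) hnot
  · have h1 : ∀ i ∈ Finset.range (A.totalDegree + 1),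
        (if m = i + e then homogeneousComponent i A * H else 0) = 0 := by
      intro i hi
      have := Finset.mem_range.mp hi
      rw [if_neg (by omega)]
    rw [Finset.sum_eq_zero h1,
      homogeneousComponent_eq_zero _ _ (show A.totalDegree < m - e by omega), zero_mul]

lemma hc_ne_zero_of_coeff {G : MvPolynomial σ ℂ} {d : σ →₀ ℕ} (h : coeff d G ≠ 0) :
    homogeneousComponent d.degree G ≠ 0 := by
  intro h0
  apply h
  have := coeff_homogeneousComponent (σ := σ) (R := ℂ) d.degree G d
  rw [h0, if_pos rfl] at this
  simpa using this.symm

/-- factors of a nonzero homogeneous polynomial are homogeneous -/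
lemma factors_homogeneous {G H : MvPolynomial σ ℂ} {δ : ℕ}
    (h : (G * H).IsHomogeneous δ) (hG0 : G ≠ 0) (hH0 : H ≠ 0) :
    G.IsHomogeneous G.totalDegree ∧ H.IsHomogeneous H.totalDegree ∧
      G.totalDegree + H.totalDegree = δ := by
  classical
  set g := G.totalDegree with hg
  set h' := H.totalDegree with hh'
  -- top degrees attained
  obtain ⟨dG, hdGmem, hdGval⟩ :=
    G.support.exists_mem_eq_sup (MvPolynomial.support_nonempty.mpr hG0)
      (fun s => s.sum fun _ e => e)
  obtain ⟨dH, hdHmem, hdHval⟩ :=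
    H.support.exists_mem_eq_sup (MvPolynomial.support_nonempty.mpr hH0)
      (fun s => s.sum fun _ e => e)
  have hdGdeg : dG.degree = g := hdGval.symm
  have hdHdeg : dH.degree = h' := hdHval.symm
  have hGtop : ∀ u : σ →₀ ℕ, g < u.degree → coeff u G = 0 := fun u hu =>
    coeff_eq_zero_of_totalDegree_lt hu
  have hHtop : ∀ v : σ →₀ ℕ, h' < v.degree → coeff v H = 0 := fun v hv =>
    coeff_eq_zero_of_totalDegree_lt hv
  -- the top component of G*H is nonzero, hence g + h' = δ
  have htopcomp := hc_mul_high G H g h' hGtop hHtop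
  have hGne : homogeneousComponent g G ≠ 0 := by
    have := hc_ne_zero_of_coeff (G := G) (d := dG) (mem_support_iff.mp hdGmem)
    rwa [hdGdeg] at this
  have hHne : homogeneousComponent h' H ≠ 0 := by
    have := hc_ne_zero_of_coeff (G := H) (d := dH) (mem_support_iff.mp hdHmem)
    rwa [hdHdeg] at this
  have hprodne : homogeneousComponent (g + h') (G * H) ≠ 0 := by
    rw [htopcomp]; exact mul_ne_zero hGne hHne
  have hgh : g + h' = δ := by
    by_contra hne
    rw [homogeneousComponent_of_mem h, if_neg hne] at hprodne
    exact hprodne rfl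
  -- bottom degrees
  let SG := G.support.image Finsupp.degree
  let SH := H.support.image Finsupp.degree
  have hSGne : SG.Nonempty := (Finset.image_nonempty).mpr (MvPolynomial.support_nonempty.mpr hG0)
  have hSHne : SH.Nonempty := (Finset.image_nonempty).mpr (MvPolynomial.support_nonempty.mpr hH0)
  set kG := SG.min' hSGne with hkG
  set kH := SH.min' hSHne with hkH
  have hGlow : ∀ u : σ →₀ ℕ, u.degree < kG → coeff u G = 0 := by
    intro u hu
    by_contra hc0
    exact absurd (Finset.min'_le SG u.degree
      (Finset.mem_image_of_mem _ (mem_support_iff.mpr hc0))) (by omega)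
  have hHlow : ∀ v : σ →₀ ℕ, v.degree < kH → coeff v H = 0 := by
    intro v hv
    by_contra hc0
    exact absurd (Finset.min'_le SH v.degree
      (Finset.mem_image_of_mem _ (mem_support_iff.mpr hc0))) (by omega)
  -- the bottom component is nonzero too, hence kG + kH = δ
  obtain ⟨uG, huGmem, huGdeg⟩ := Finset.mem_image.mp (SG.min'_mem hSGne)
  obtain ⟨uH, huHmem, huHdeg⟩ := Finset.mem_image.mp (SH.min'_mem hSHne)
  have hGneb : homogeneousComponent kG G ≠ 0 := by
    have := hc_ne_zero_of_coeff (G := G) (d := uG) (mem_support_iff.mp huGmem)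
    rwa [huGdeg] at this
  have hHneb : homogeneousComponent kH H ≠ 0 := by
    have := hc_ne_zero_of_coeff (G := H) (d := uH) (mem_support_iff.mp huHmem)
    rwa [huHdeg] at this
  have hbotcomp := hc_mul_low G H kG kH hGlow hHlow
  have hprodneb : homogeneousComponent (kG + kH) (G * H) ≠ 0 := by
    rw [hbotcomp]; exact mul_ne_zero hGneb hHneb
  have hkgh : kG + kH = δ := by
    by_contra hne
    rw [homogeneousComponent_of_mem h, if_neg hne] at hprodneb
    exact hprodneb rfl
  -- k's are at most the total degrees
  have hkGle : kG ≤ g := by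
    rw [hkG, ← huGdeg]; exact degree_le_totalDegree huGmem
  have hkHle : kH ≤ h' := by
    rw [hkH, ← huHdeg]; exact degree_le_totalDegree huHmem
  have hkGeq : kG = g := by omega
  have hkHeq : kH = h' := by omega
  refine ⟨isHomogeneous_of_coeff G g ?_, isHomogeneous_of_coeff H h' ?_, hgh⟩
  · intro d hd
    have h1 : kG ≤ d.degree := by
      by_contra hlt; exact hd (hGlow d (by omega))
    have h2 : d.degree ≤ g := degree_le_totalDegree (mem_support_iff.mpr hd)
    omega
  · intro d hd
    have h1 : kH ≤ d.degree := by
      by_contra hlt; exact hd (hHlow d (by omega))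
    have h2 : d.degree ≤ h' := degree_le_totalDegree (mem_support_iff.mpr hd)
    omega

noncomputable def degreeSetEquiv (n : ℕ) :
    {d : Fin 3 →₀ ℕ // d.degree = n} ≃ Sym (Fin 3) n := by
  refine Equiv.subtypeEquiv (Multiset.toFinsupp (α := Fin 3)).toEquiv.symm ?_
  intro d
  have hcard : Multiset.card ((Multiset.toFinsupp (α := Fin 3)).toEquiv.symm d) = d.degree := by
    show Multiset.card ((Multiset.toFinsupp (α := Fin 3)).symm d) = d.degree
    rw [Multiset.toFinsupp_symm_apply, Finsupp.card_toMultiset]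
    rfl
  show d.degree = n ↔ Multiset.card _ = n
  rw [hcard]

noncomputable instance degreeSetFintype (n : ℕ) :
    Fintype {d : Fin 3 →₀ ℕ // d.degree = n} :=
  Fintype.ofEquiv _ (degreeSetEquiv n).symm

lemma card_degreeSet (n : ℕ) :
    Fintype.card {d : Fin 3 →₀ ℕ // d.degree = n} = (n + 2).choose 2 := by
  rw [Fintype.card_congr (degreeSetEquiv n), Sym.card_sym_eq_multichoose,
    Fintype.card_fin, Nat.multichoose_eq]
  have h1 : 3 + n - 1 = n + 2 := by omega
  rw [h1]
  exact Nat.choose_symm (n := n + 2) (k := 2) (by omega)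

noncomputable instance degreeSetFintype' (n : ℕ) :
    Fintype {d : Fin 3 →₀ ℕ | d.degree = n} := degreeSetFintype n

/-- linear equivalence of the degree-`n` homogeneous submodule with a function space -/
noncomputable def hsEquiv (n : ℕ) :
    (homogeneousSubmodule (Fin 3) ℂ n) ≃ₗ[ℂ]
      ({d : Fin 3 →₀ ℕ | d.degree = n} → ℂ) :=
  (LinearEquiv.ofEq _ _ (homogeneousSubmodule_eq_finsupp_supported (Fin 3) ℂ n)).trans
    ((AddMonoidAlgebra.supportedEquivFinsupp _).trans
      (Finsupp.linearEquivFunOnFinite ℂ ℂ _))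


noncomputable instance hsFD (n : ℕ) :
    FiniteDimensional ℂ (homogeneousSubmodule (Fin 3) ℂ n) :=
  Module.Finite.equiv (hsEquiv n).symm

lemma finrank_hs (n : ℕ) :
    Module.finrank ℂ (homogeneousSubmodule (Fin 3) ℂ n) = (n + 2).choose 2 := by
  rw [(hsEquiv n).finrank_eq, Module.finrank_fintype_fun_eq_card]
  exact card_degreeSet n

lemma two_mul_choose (n : ℕ) : 2 * ((n + 2).choose 2) = (n + 1) * (n + 2) := by
  rw [Nat.choose_two_right, show n + 2 - 1 = n + 1 from rfl, mul_comm (n+2) (n+1),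
    Nat.mul_div_cancel' (Even.two_dvd (Nat.even_mul_succ_self (n + 1)))]

lemma keyineq (c d e : ℕ) (hd : 1 ≤ d) (he : 1 ≤ e) :
    (c + d + e + 2).choose 2 + (c + 2).choose 2 >
      (c + e + 2).choose 2 + (c + d + 2).choose 2 := by
  have h1 := two_mul_choose (c + d + e)
  have h2 := two_mul_choose c
  have h3 := two_mul_choose (c + e)
  have h4 := two_mul_choose (c + d)
  nlinarith [Nat.mul_le_mul hd he]
lemma common_zero (G H : MvPolynomial (Fin 3) ℂ) {d e : ℕ}
    (hG : G.IsHomogeneous d) (hH : H.IsHomogeneous e) (hd : 1 ≤ d) (he : 1 ≤ e)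
    (hG0 : G ≠ 0) (hH0 : H ≠ 0) :
    ∃ x : Fin 3 → ℂ, x ≠ 0 ∧ eval x G = 0 ∧ eval x H = 0 := by
  classical
  by_contra hno
  push_neg at hno
  set I : Ideal (MvPolynomial (Fin 3) ℂ) := Ideal.span {G, H} with hI
  have hGI : G ∈ I := Ideal.subset_span (by simp)
  have hHI : H ∈ I := Ideal.subset_span (by simp)
  have hzl : zeroLocus ℂ I ⊆ {0} := by
    intro x hx
    by_contra hx0
    have hx0' : x ≠ 0 := hx0
    obtain h2 := hno x hx0' (hx G hGI)
    exact h2 (hx H hHI)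
  -- each variable is in the radical
  have hXrad : ∀ i : Fin 3, X i ∈ I.radical := by
    intro i
    rw [← vanishingIdeal_zeroLocus_eq_radical (K := ℂ)]
    intro x hx
    have : x = 0 := hzl hx
    rw [this, aeval_X]
    rfl
  have hXpow : ∀ i : Fin 3, ∃ n : ℕ, X i ^ n ∈ I := fun i => hXrad i
  choose nn hnn using hXpow
  set N := (nn 0) ⊔ (nn 1) ⊔ (nn 2) with hN
  have hXN : ∀ i : Fin 3, X (σ := Fin 3) (R := ℂ) i ^ N ∈ I := by
    intro i
    have hle : nn i ≤ N := by
      fin_cases i <;> simp [hN] <;> omega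
    have : X (σ := Fin 3) (R := ℂ) i ^ N = X i ^ (N - nn i) * X i ^ nn i := by
      rw [← pow_add]
      congr 1
      omega
    rw [this]
    exact Ideal.mul_mem_left _ _ (hnn i)
  set m := 3 * N + d + e with hm
  -- every homogeneous polynomial of degree m is in I
  have hmono : ∀ v : Fin 3 →₀ ℕ, v.degree = m → ∀ c : ℂ, monomial v c ∈ I := by
    intro v hv c
    have hex : ∃ i : Fin 3, N ≤ v i := by
      by_contra hall
      push_neg at hall
      have hle : v.degree ≤ v 0 + v 1 + v 2 := by
        have : v.degree = ∑ i ∈ v.support, v i := rfl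
        rw [this]
        calc ∑ i ∈ v.support, v i ≤ ∑ i : Fin 3, v i :=
              Finset.sum_le_sum_of_subset (Finset.subset_univ _)
          _ = v 0 + v 1 + v 2 := by rw [Fin.sum_univ_three]
      have h0 := hall 0; have h1 := hall 1; have h2 := hall 2
      omega
    obtain ⟨i, hi⟩ := hex
    have hsub : Finsupp.single i N ≤ v := by
      rw [Finsupp.single_le_iff]; exact hi
    have hvv : (v - Finsupp.single i N) + Finsupp.single i N = v :=
      tsub_add_cancel_of_le hsub
    have : monomial v c = monomial (v - Finsupp.single i N) c * (X i ^ N) := by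
      rw [X_pow_eq_monomial, monomial_mul, mul_one, hvv]
    rw [this]
    exact Ideal.mul_mem_left _ _ (hXN i)
  have hRmI : ∀ P : MvPolynomial (Fin 3) ℂ, P.IsHomogeneous m → P ∈ I := by
    intro P hP
    rw [← P.support_sum_monomial_coeff]
    refine Ideal.sum_mem _ ?_
    intro v hv
    refine hmono v ?_ _
    have := hP (mem_support_iff.mp hv)
    rw [← this, Finsupp.degree_eq_weight_one]; rfl
  have hdm : d ≤ m := by omega
  have hem : e ≤ m := by omega
  have hdem : d + e ≤ m := by omega
  -- surjectivity data
  have hsurj : ∀ P : MvPolynomial (Fin 3) ℂ, P.IsHomogeneous m →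
      ∃ A B : MvPolynomial (Fin 3) ℂ, A.IsHomogeneous (m - d) ∧ B.IsHomogeneous (m - e) ∧
        A * G + B * H = P := by
    intro P hP
    obtain ⟨a, b, hab⟩ := Ideal.mem_span_pair.mp (hRmI P hP)
    refine ⟨homogeneousComponent (m - d) a, homogeneousComponent (m - e) b,
      homogeneousComponent_isHomogeneous _ _, homogeneousComponent_isHomogeneous _ _, ?_⟩
    have := congrArg (homogeneousComponent m) hab
    rw [map_add, hc_mul_homog a G hG hdm, hc_mul_homog b H hH hem,
      homogeneousComponent_of_mem ((mem_homogeneousSubmodule _ _).mpr hP), if_pos rfl] at this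
    exact this
  -- the linear maps
  set Sd := homogeneousSubmodule (Fin 3) ℂ (m - d) with hSd
  set Se := homogeneousSubmodule (Fin 3) ℂ (m - e) with hSe
  set Sm := homogeneousSubmodule (Fin 3) ℂ m with hSm
  set Sde := homogeneousSubmodule (Fin 3) ℂ (m - d - e) with hSde
  have hmemφ : ∀ p : Sd × Se, (p.1 : MvPolynomial (Fin 3) ℂ) * G + (p.2 : _) * H ∈ Sm := by
    rintro ⟨⟨A, hA⟩, ⟨B, hB⟩⟩
    have h1 : (A * G).IsHomogeneous m := by
      have := (hA : A.IsHomogeneous (m - d)).mul hG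
      rwa [Nat.sub_add_cancel hdm] at this
    have h2 : (B * H).IsHomogeneous m := by
      have := (hB : B.IsHomogeneous (m - e)).mul hH
      rwa [Nat.sub_add_cancel hem] at this
    exact Submodule.add_mem _ h1 h2
  set φ : (Sd × Se) →ₗ[ℂ] Sm :=
    { toFun := fun p => ⟨(p.1 : MvPolynomial (Fin 3) ℂ) * G + (p.2 : _) * H, hmemφ p⟩
      map_add' := by
        rintro ⟨A, B⟩ ⟨A', B'⟩
        exact Subtype.ext (show ((A : MvPolynomial (Fin 3) ℂ) + A') * G + ((B : MvPolynomial (Fin 3) ℂ) + B') * H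
          = ((A : MvPolynomial (Fin 3) ℂ) * G + (B : MvPolynomial (Fin 3) ℂ) * H)
            + ((A' : MvPolynomial (Fin 3) ℂ) * G + (B' : MvPolynomial (Fin 3) ℂ) * H) by ring)
      map_smul' := by
        rintro c ⟨A, B⟩
        exact Subtype.ext (show (c • (A : MvPolynomial (Fin 3) ℂ)) * G + (c • (B : MvPolynomial (Fin 3) ℂ)) * H
          = c • ((A : MvPolynomial (Fin 3) ℂ) * G + (B : MvPolynomial (Fin 3) ℂ) * H) by
            rw [smul_add, smul_mul_assoc, smul_mul_assoc]) } with hφ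
  have hφsurj : Function.Surjective φ := by
    rintro ⟨P, hP⟩
    obtain ⟨A, B, hA, hB, hABP⟩ := hsurj P hP
    exact ⟨(⟨A, hA⟩, ⟨B, hB⟩), Subtype.ext hABP⟩
  have hmemψ1 : ∀ C : Sde, (C : MvPolynomial (Fin 3) ℂ) * H ∈ Sd := by
    rintro ⟨C, hC⟩
    have := (hC : C.IsHomogeneous (m - d - e)).mul hH
    rwa [show m - d - e + e = m - d by omega] at this
  have hmemψ2 : ∀ C : Sde, -((C : MvPolynomial (Fin 3) ℂ) * G) ∈ Se := by
    rintro ⟨C, hC⟩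
    refine Submodule.neg_mem _ ?_
    have := (hC : C.IsHomogeneous (m - d - e)).mul hG
    rwa [show m - d - e + d = m - e by omega] at this
  set ψ : Sde →ₗ[ℂ] (Sd × Se) :=
    { toFun := fun C => (⟨(C : MvPolynomial (Fin 3) ℂ) * H, hmemψ1 C⟩,
        ⟨-((C : MvPolynomial (Fin 3) ℂ) * G), hmemψ2 C⟩)
      map_add' := by
        rintro ⟨C, hC⟩ ⟨C', hC'⟩
        exact Prod.ext
          (Subtype.ext (show (C + C') * H = C * H + C' * H by ring))
          (Subtype.ext (show -((C + C') * G) = -(C * G) + -(C' * G) by ring))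
      map_smul' := by
        rintro c ⟨C, hC⟩
        exact Prod.ext
          (Subtype.ext (show (c • C) * H = c • (C * H) by rw [smul_mul_assoc]))
          (Subtype.ext (show -((c • C) * G) = c • (-(C * G)) by
            rw [smul_neg, smul_mul_assoc])) } with hψ
  have hψinj : Function.Injective ψ := by
    rintro ⟨C, hC⟩ ⟨C', hC'⟩ hCC
    have h1 : C * H = C' * H := congrArg (fun q => ((Prod.fst q : Sd) : MvPolynomial (Fin 3) ℂ)) hCC
    apply Subtype.ext
    exact mul_right_cancel₀ hH0 h1
  have hrange : LinearMap.range ψ ≤ LinearMap.ker φ := by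
    rintro p hp
    obtain ⟨C, rfl⟩ := LinearMap.mem_range.mp hp
    simp only [LinearMap.mem_ker]
    apply Subtype.ext
    show (C : MvPolynomial (Fin 3) ℂ) * H * G + -((C : MvPolynomial (Fin 3) ℂ) * G) * H = (0 : MvPolynomial (Fin 3) ℂ)
    ring
  -- dimension count
  have hrn := LinearMap.finrank_range_add_finrank_ker φ
  have hrtop : LinearMap.range φ = ⊤ := LinearMap.range_eq_top.mpr hφsurj
  rw [hrtop] at hrn
  have hker : Module.finrank ℂ (LinearMap.ker φ) ≥ Module.finrank ℂ Sde := by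
    calc Module.finrank ℂ Sde = Module.finrank ℂ (LinearMap.range ψ) :=
          (LinearMap.finrank_range_of_inj hψinj).symm
      _ ≤ Module.finrank ℂ (LinearMap.ker φ) := Submodule.finrank_mono hrange
  have htop : Module.finrank ℂ (⊤ : Submodule ℂ Sm) = Module.finrank ℂ Sm :=
    finrank_top ℂ _
  have hprod : Module.finrank ℂ (Sd × Se) = Module.finrank ℂ Sd + Module.finrank ℂ Se :=
    Module.finrank_prod
  rw [htop, hprod] at hrn
  have hineq : Module.finrank ℂ Sm + Module.finrank ℂ Sde ≤
      Module.finrank ℂ Sd + Module.finrank ℂ Se := by omega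
  rw [hSd, hSe, hSm, hSde, finrank_hs, finrank_hs, finrank_hs, finrank_hs] at hineq
  rw [show m + 2 = m - d - e + d + e + 2 by omega,
    show m - d + 2 = m - d - e + e + 2 by omega,
    show m - e + 2 = m - d - e + d + 2 by omega] at hineq
  have := keyineq (m - d - e) d e hd he
  omega

end NonsingIrred


/-- a homogeneous polynomial `F ∈ ℂ[x,y,z]` of degree `δ ≥ 1`
whose partial derivatives have no common zero in `ℂ³ \ {0}` (i.e. the projective
plane curve `F = 0` is nonsingular) is irreducible. -/
theorem nonsingular_implies_irreducible (δ : ℕ) (hδ : 1 ≤ δ)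
    (F : MvPolynomial (Fin 3) ℂ) (hhom : F.IsHomogeneous δ)
    (hns : ∀ x : Fin 3 → ℂ, x ≠ 0 →
      ∃ i : Fin 3, MvPolynomial.eval x (MvPolynomial.pderiv i F) ≠ 0) :
    Irreducible F := by
  classical
  have hF0 : F ≠ 0 := by
    obtain ⟨i, hi⟩ := hns 1 (by
      intro h
      exact one_ne_zero (congrFun h 0))
    intro h
    rw [h] at hi
    simp at hi
  have hcoeff0 : ∀ q : MvPolynomial (Fin 3) ℂ, q.IsHomogeneous δ →
      MvPolynomial.constantCoeff q = 0 := by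
    intro q hq
    rw [MvPolynomial.constantCoeff_eq]
    exact hq.coeff_eq_zero (by rw [map_zero]; omega)
  constructor
  · intro hu
    obtain ⟨u, rfl⟩ := hu
    have h1 : (u : MvPolynomial (Fin 3) ℂ) * ↑u⁻¹ = 1 := u.mul_inv
    have h2 := congrArg MvPolynomial.constantCoeff h1
    rw [map_mul, map_one, hcoeff0 _ hhom, zero_mul] at h2
    exact zero_ne_one h2
  · intro a b hab
    by_contra hcon
    push_neg at hcon
    obtain ⟨ha, hb⟩ := hcon
    have ha0 : a ≠ 0 := by
      rintro rfl
      rw [zero_mul] at hab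
      exact hF0 hab
    have hb0 : b ≠ 0 := by
      rintro rfl
      rw [mul_zero] at hab
      exact hF0 hab
    have habhom : (a * b).IsHomogeneous δ := hab ▸ hhom
    obtain ⟨hahom, hbhom, hsum⟩ := NonsingIrred.factors_homogeneous habhom ha0 hb0
    -- both total degrees are at least 1
    have hconstIsUnit : ∀ q : MvPolynomial (Fin 3) ℂ, q ≠ 0 → q.IsHomogeneous 0 → IsUnit q := by
      intro q hq0 hq
      have hqC : q = MvPolynomial.C (MvPolynomial.coeff 0 q) := by
        ext d
        by_cases hd : d = 0
        · rw [hd, MvPolynomial.coeff_C, if_pos rfl]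
        · rw [hq.coeff_eq_zero (fun hdeg => hd ((Finsupp.degree_eq_zero_iff d).mp hdeg)),
            MvPolynomial.coeff_C, if_neg (fun hh => hd hh.symm)]
      have hc0 : MvPolynomial.coeff 0 q ≠ 0 := by
        intro hc
        rw [hqC, hc, map_zero] at hq0
        exact hq0 rfl
      rw [hqC]
      exact isUnit_iff_exists_inv.mpr ⟨MvPolynomial.C (MvPolynomial.coeff 0 q)⁻¹, by
        rw [← MvPolynomial.C_mul, mul_inv_cancel₀ hc0, MvPolynomial.C_1]⟩
    have hta : 1 ≤ a.totalDegree := by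
      by_contra hlt
      have h0 : a.totalDegree = 0 := by omega
      exact ha (hconstIsUnit a ha0 (h0 ▸ hahom))
    have htb : 1 ≤ b.totalDegree := by
      by_contra hlt
      have h0 : b.totalDegree = 0 := by omega
      exact hb (hconstIsUnit b hb0 (h0 ▸ hbhom))
    obtain ⟨x, hx0, hxa, hxb⟩ :=
      NonsingIrred.common_zero a b hahom hbhom hta htb ha0 hb0
    obtain ⟨i, hi⟩ := hns x hx0
    apply hi
    rw [hab, MvPolynomial.pderiv_mul, map_add, map_mul, map_mul, hxa, hxb, mul_zero, zero_mul,
      add_zero]
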